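/- Let F be a finite set and for i ∈ F define α_i : Δ(2^F) → [0,1] by α_i(ψ) := Pr_{A∼ψ}[i ∈ A]. For any i ∈ F, ψ ∈ Δ(2^F), and p ∈ [0,1], there exists ψ' ∈ Δ(2^F) with α_i(ψ') = p, α_j(ψ') = α_j(ψ) for all j ≠ i, and ‖ψ − ψ'‖₁ = 2|α_i(ψ) − p|. -/

import Mathlib

open Finset

section aux
variable {F : Type*} [Fintype F] [DecidableEq F]

lemma insert_sum (i : F) (f : Finset F → ℝ) (P : Finset F → Prop) [DecidablePred P]
    (hP : ∀ A : Finset F, i ∉ A → (P (insert i A) ↔ P A)) :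
    ∑ A ∈ univ.filter (fun A => P A ∧ i ∉ A), f (insert i A)
      = ∑ A ∈ univ.filter (fun A => P A ∧ i ∈ A), f A := by
  refine Finset.sum_nbij' (fun A => insert i A) (fun A => A.erase i) ?_ ?_ ?_ ?_ ?_
  · intro A hA
    simp only [mem_filter, mem_univ, true_and] at hA ⊢
    exact ⟨(hP A hA.2).2 hA.1, mem_insert_self i A⟩
  · intro A hA
    simp only [mem_filter, mem_univ, true_and] at hA ⊢
    refine ⟨?_, notMem_erase i A⟩
    rw [← hP _ (notMem_erase i A), insert_erase hA.2]
    exact hA.1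
  · intro A hA
    simp only [mem_filter, mem_univ, true_and] at hA
    exact erase_insert hA.2
  · intro A hA
    simp only [mem_filter, mem_univ, true_and] at hA
    exact insert_erase hA.2
  · intro A _; rfl

lemma erase_sum (i : F) (f : Finset F → ℝ) (P : Finset F → Prop) [DecidablePred P]
    (hP : ∀ A : Finset F, i ∉ A → (P (insert i A) ↔ P A)) :
    ∑ A ∈ univ.filter (fun A => P A ∧ i ∈ A), f (A.erase i)
      = ∑ A ∈ univ.filter (fun A => P A ∧ i ∉ A), f A := by
  rw [← insert_sum i (fun A => f (A.erase i)) P hP]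
  refine Finset.sum_congr rfl fun A hA => ?_
  simp only [mem_filter, mem_univ, true_and] at hA
  rw [erase_insert hA.2]

end aux

theorem fix_event_probability (F : Type*) [Fintype F] [DecidableEq F]
    (ψ : Finset F → ℝ) (hψ : (∀ A, 0 ≤ ψ A) ∧ ∑ A, ψ A = 1)
    (i : F) (p : ℝ) (hp : p ∈ Set.Icc (0:ℝ) 1) :
    ∃ ψ' : Finset F → ℝ, (∀ A, 0 ≤ ψ' A) ∧ (∑ A, ψ' A = 1) ∧
      (∑ A ∈ Finset.univ.filter (fun A : Finset F => i ∈ A), ψ' A) = p ∧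
      (∀ j, j ≠ i →
        (∑ A ∈ Finset.univ.filter (fun A : Finset F => j ∈ A), ψ' A) =
          ∑ A ∈ Finset.univ.filter (fun A : Finset F => j ∈ A), ψ A) ∧
      (∑ A, |ψ A - ψ' A|) =
        2 * |(∑ A ∈ Finset.univ.filter (fun A : Finset F => i ∈ A), ψ A) - p| := by
  classical
  obtain ⟨hpos, hsum⟩ := hψ
  obtain ⟨hp0, hp1⟩ := hp
  set q : ℝ := ∑ A ∈ univ.filter (fun A : Finset F => i ∈ A), ψ A with hq
  set r : ℝ := ∑ A ∈ univ.filter (fun A : Finset F => i ∉ A), ψ A with hr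
  have hq0 : 0 ≤ q := Finset.sum_nonneg fun A _ => hpos A
  have hr0 : 0 ≤ r := Finset.sum_nonneg fun A _ => hpos A
  have hqr : q + r = 1 := by
    rw [hq, hr, Finset.sum_filter_add_sum_filter_not]; exact hsum
  -- bijection sums
  have hbij : ∑ A ∈ univ.filter (fun A : Finset F => i ∉ A), ψ (insert i A) = q := by
    rw [hq]
    have := insert_sum i ψ (fun _ => True) (by simp)
    simpa using this
  have hbij' : ∑ A ∈ univ.filter (fun A : Finset F => i ∈ A), ψ (A.erase i) = r := by
    rw [hr]
    have := erase_sum i ψ (fun _ => True) (by simp)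
    simpa using this
  rcases lt_trichotomy p q with hlt | heq | hgt
  · -- p < q : scale down the i-mass
    have hqpos : 0 < q := lt_of_le_of_lt hp0 hlt
    set t : ℝ := p / q with ht
    have ht0 : 0 ≤ t := div_nonneg hp0 hq0
    have ht1 : t ≤ 1 := div_le_one_of_le₀ hlt.le hq0
    have htq : t * q = p := div_mul_cancel₀ p hqpos.ne'
    refine ⟨fun A => if i ∈ A then t * ψ A else ψ A + (1 - t) * ψ (insert i A),
      ?_, ?_, ?_, ?_, ?_⟩
    · intro A
      by_cases h : i ∈ A <;> simp only [h, if_true, if_false]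
      · exact mul_nonneg ht0 (hpos A)
      · exact add_nonneg (hpos A) (mul_nonneg (by linarith) (hpos _))
    · rw [← Finset.sum_filter_add_sum_filter_not univ (fun A : Finset F => i ∈ A)]
      have e1 : ∑ A ∈ univ.filter (fun A : Finset F => i ∈ A),
          (if i ∈ A then t * ψ A else ψ A + (1 - t) * ψ (insert i A)) = t * q := by
        rw [hq, Finset.mul_sum]
        refine Finset.sum_congr rfl fun A hA => ?_
        simp only [mem_filter] at hA; simp [hA.2]
      have e2 : ∑ A ∈ univ.filter (fun A : Finset F => i ∉ A),
          (if i ∈ A then t * ψ A else ψ A + (1 - t) * ψ (insert i A))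
          = r + (1 - t) * q := by
        rw [hr, ← hbij, Finset.mul_sum, ← Finset.sum_add_distrib]
        refine Finset.sum_congr rfl fun A hA => ?_
        simp only [mem_filter] at hA; simp [hA.2]
      rw [e1, e2]; nlinarith
    · rw [← htq, hq, Finset.mul_sum]
      refine Finset.sum_congr rfl fun A hA => ?_
      simp only [mem_filter] at hA; simp [hA.2]
    · intro j hj
      have hbijj := insert_sum i ψ (fun A => j ∈ A)
        (fun A _ => by simp [Finset.mem_insert, hj])
      rw [← Finset.sum_filter_add_sum_filter_not (univ.filter (fun A : Finset F => j ∈ A))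
        (fun A : Finset F => i ∈ A),
        ← Finset.sum_filter_add_sum_filter_not (univ.filter (fun A : Finset F => j ∈ A))
        (fun A : Finset F => i ∈ A) ψ]
      simp only [Finset.filter_filter]
      have e1 : ∑ A ∈ univ.filter (fun A : Finset F => j ∈ A ∧ i ∈ A),
          (if i ∈ A then t * ψ A else ψ A + (1 - t) * ψ (insert i A))
          = t * ∑ A ∈ univ.filter (fun A : Finset F => j ∈ A ∧ i ∈ A), ψ A := by
        rw [Finset.mul_sum]
        refine Finset.sum_congr rfl fun A hA => ?_
        simp only [mem_filter] at hA; simp [hA.2.2]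
      have e2 : ∑ A ∈ univ.filter (fun A : Finset F => j ∈ A ∧ i ∉ A),
          (if i ∈ A then t * ψ A else ψ A + (1 - t) * ψ (insert i A))
          = (∑ A ∈ univ.filter (fun A : Finset F => j ∈ A ∧ i ∉ A), ψ A)
            + (1 - t) * ∑ A ∈ univ.filter (fun A : Finset F => j ∈ A ∧ i ∈ A), ψ A := by
        rw [← hbijj, Finset.mul_sum, ← Finset.sum_add_distrib]
        refine Finset.sum_congr rfl fun A hA => ?_
        simp only [mem_filter] at hA; simp [hA.2.2]
      rw [e1, e2]; ring
    · have habs : |q - p| = q - p := abs_of_nonneg (by linarith)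
      rw [hq] at habs ⊢
      rw [habs, ← Finset.sum_filter_add_sum_filter_not univ (fun A : Finset F => i ∈ A)]
      have e1 : ∑ A ∈ univ.filter (fun A : Finset F => i ∈ A),
          |ψ A - (if i ∈ A then t * ψ A else ψ A + (1 - t) * ψ (insert i A))|
          = (1 - t) * q := by
        rw [hq, Finset.mul_sum]
        refine Finset.sum_congr rfl fun A hA => ?_
        simp only [mem_filter] at hA
        rw [if_pos hA.2, show ψ A - t * ψ A = (1 - t) * ψ A by ring]
        exact abs_of_nonneg (mul_nonneg (by linarith) (hpos A))
      have e2 : ∑ A ∈ univ.filter (fun A : Finset F => i ∉ A),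
          |ψ A - (if i ∈ A then t * ψ A else ψ A + (1 - t) * ψ (insert i A))|
          = (1 - t) * q := by
        rw [← hbij, Finset.mul_sum]
        refine Finset.sum_congr rfl fun A hA => ?_
        simp only [mem_filter] at hA
        rw [if_neg hA.2, show ψ A - (ψ A + (1 - t) * ψ (insert i A))
          = -((1 - t) * ψ (insert i A)) by ring, abs_neg]
        exact abs_of_nonneg (mul_nonneg (by linarith) (hpos _))
      rw [e1, e2]
      nlinarith
  · exact ⟨ψ, hpos, hsum, heq.symm, fun j _ => rfl, by simp [← hq, heq]⟩
  · -- q < p : move mass onto i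
    have hrpos : 0 < r := by nlinarith
    set s : ℝ := (p - q) / r with hs
    have hs0 : 0 ≤ s := div_nonneg (by linarith) hr0
    have hs1 : s ≤ 1 := div_le_one_of_le₀ (by linarith) hr0
    have hsr : s * r = p - q := div_mul_cancel₀ _ hrpos.ne'
    refine ⟨fun A => if i ∈ A then ψ A + s * ψ (A.erase i) else (1 - s) * ψ A,
      ?_, ?_, ?_, ?_, ?_⟩
    · intro A
      by_cases h : i ∈ A <;> simp only [h, if_true, if_false]
      · exact add_nonneg (hpos A) (mul_nonneg hs0 (hpos _))
      · exact mul_nonneg (by linarith) (hpos A)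
    · rw [← Finset.sum_filter_add_sum_filter_not univ (fun A : Finset F => i ∈ A)]
      have e1 : ∑ A ∈ univ.filter (fun A : Finset F => i ∈ A),
          (if i ∈ A then ψ A + s * ψ (A.erase i) else (1 - s) * ψ A) = q + s * r := by
        rw [hq, ← hbij', Finset.mul_sum, ← Finset.sum_add_distrib]
        refine Finset.sum_congr rfl fun A hA => ?_
        simp only [mem_filter] at hA; simp [hA.2]
      have e2 : ∑ A ∈ univ.filter (fun A : Finset F => i ∉ A),
          (if i ∈ A then ψ A + s * ψ (A.erase i) else (1 - s) * ψ A) = (1 - s) * r := by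
        rw [hr, Finset.mul_sum]
        refine Finset.sum_congr rfl fun A hA => ?_
        simp only [mem_filter] at hA; simp [hA.2]
      rw [e1, e2]; nlinarith
    · have e1 : ∑ A ∈ univ.filter (fun A : Finset F => i ∈ A),
          (if i ∈ A then ψ A + s * ψ (A.erase i) else (1 - s) * ψ A) = q + s * r := by
        rw [hq, ← hbij', Finset.mul_sum, ← Finset.sum_add_distrib]
        refine Finset.sum_congr rfl fun A hA => ?_
        simp only [mem_filter] at hA; simp [hA.2]
      rw [e1]; linarith
    · intro j hj
      have hbijj := erase_sum i ψ (fun A => j ∈ A)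
        (fun A _ => by simp [Finset.mem_insert, hj])
      rw [← Finset.sum_filter_add_sum_filter_not (univ.filter (fun A : Finset F => j ∈ A))
        (fun A : Finset F => i ∈ A),
        ← Finset.sum_filter_add_sum_filter_not (univ.filter (fun A : Finset F => j ∈ A))
        (fun A : Finset F => i ∈ A) ψ]
      simp only [Finset.filter_filter]
      have e1 : ∑ A ∈ univ.filter (fun A : Finset F => j ∈ A ∧ i ∈ A),
          (if i ∈ A then ψ A + s * ψ (A.erase i) else (1 - s) * ψ A)
          = (∑ A ∈ univ.filter (fun A : Finset F => j ∈ A ∧ i ∈ A), ψ A)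
            + s * ∑ A ∈ univ.filter (fun A : Finset F => j ∈ A ∧ i ∉ A), ψ A := by
        rw [← hbijj, Finset.mul_sum, ← Finset.sum_add_distrib]
        refine Finset.sum_congr rfl fun A hA => ?_
        simp only [mem_filter] at hA; simp [hA.2.2]
      have e2 : ∑ A ∈ univ.filter (fun A : Finset F => j ∈ A ∧ i ∉ A),
          (if i ∈ A then ψ A + s * ψ (A.erase i) else (1 - s) * ψ A)
          = (1 - s) * ∑ A ∈ univ.filter (fun A : Finset F => j ∈ A ∧ i ∉ A), ψ A := by
        rw [Finset.mul_sum]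
        refine Finset.sum_congr rfl fun A hA => ?_
        simp only [mem_filter] at hA; simp [hA.2.2]
      rw [e1, e2]; ring
    · have habs : |q - p| = p - q := by rw [abs_of_nonpos (by linarith)]; ring
      rw [hq] at habs ⊢
      rw [habs, ← Finset.sum_filter_add_sum_filter_not univ (fun A : Finset F => i ∈ A)]
      have e1 : ∑ A ∈ univ.filter (fun A : Finset F => i ∈ A),
          |ψ A - (if i ∈ A then ψ A + s * ψ (A.erase i) else (1 - s) * ψ A)|
          = s * r := by
        rw [← hbij', Finset.mul_sum]
        refine Finset.sum_congr rfl fun A hA => ?_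
        simp only [mem_filter] at hA
        rw [if_pos hA.2, show ψ A - (ψ A + s * ψ (A.erase i)) = -(s * ψ (A.erase i)) by ring,
          abs_neg]
        exact abs_of_nonneg (mul_nonneg hs0 (hpos _))
      have e2 : ∑ A ∈ univ.filter (fun A : Finset F => i ∉ A),
          |ψ A - (if i ∈ A then ψ A + s * ψ (A.erase i) else (1 - s) * ψ A)|
          = s * r := by
        rw [hr, Finset.mul_sum]
        refine Finset.sum_congr rfl fun A hA => ?_
        simp only [mem_filter] at hA
        rw [if_neg hA.2, show ψ A - (1 - s) * ψ A = s * ψ A by ring]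
        exact abs_of_nonneg (mul_nonneg hs0 (hpos _))
      rw [e1, e2]
      nlinarith
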